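/- Let R be a commutative ring, n ∈ ℕ, and A = (a_{ij}) an n×n matrix over R. Then ∑_{σ∈S_n} sgn(σ)·(c_1(σ)−1)·(1−2c_2(σ)) ∏_{i=1}^n a_{i,σ(i)} = F_1(A) − det(A) + 2(T_{12}(A) − T_2(A)). -/

import Mathlib

/-- Number of fixed points of a permutation, as an integer. -/
def permC1 {α : Type*} [Fintype α] [DecidableEq α] (σ : Equiv.Perm α) : ℤ :=
  ((Finset.univ.filter fun u : α => σ u = u).card : ℤ)

/-- Number of `2`-cycles of a permutation, as an integer. -/
def permC2 {α : Type*} [Fintype α] [DecidableEq α] (σ : Equiv.Perm α) : ℤ :=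
  (σ.cycleType.count 2 : ℤ)

/-- The principal minor `det A(S|S)` of `A` obtained by deleting the rows and the
columns indexed by `S`. -/
def pminor {n : ℕ} {R : Type*} [CommRing R] (A : Matrix (Fin n) (Fin n) R)
    (S : Finset (Fin n)) : R :=
  Matrix.det (A.submatrix (fun x : {a : Fin n // a ∉ S} => (x : Fin n))
    (fun x : {a : Fin n // a ∉ S} => (x : Fin n)))

/-- `F₁(A) = ∑ᵢ aᵢᵢ · det A(i|i)`. -/
def F1 {n : ℕ} {R : Type*} [CommRing R] (A : Matrix (Fin n) (Fin n) R) : R :=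
  ∑ i : Fin n, A i i * pminor A {i}

/-- `T₂(A) = ∑_{i<j} aᵢⱼaⱼᵢ · det A(i,j|i,j)`. -/
def T2 {n : ℕ} {R : Type*} [CommRing R] (A : Matrix (Fin n) (Fin n) R) : R :=
  ∑ p ∈ Finset.univ.filter (fun p : Fin n × Fin n => p.1 < p.2),
    A p.1 p.2 * A p.2 p.1 * pminor A {p.1, p.2}

/-- `T₁₂(A) = ∑_{i∉{j,k}, j<k} aᵢᵢaⱼₖaₖⱼ · det A(i,j,k|i,j,k)`. -/
def T12 {n : ℕ} {R : Type*} [CommRing R] (A : Matrix (Fin n) (Fin n) R) : R :=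
  ∑ t ∈ Finset.univ.filter
      (fun t : Fin n × Fin n × Fin n => t.1 ≠ t.2.1 ∧ t.1 ≠ t.2.2 ∧ t.2.1 < t.2.2),
    A t.1 t.1 * A t.2.1 t.2.2 * A t.2.2 t.2.1 * pminor A {t.1, t.2.1, t.2.2}

namespace Stmt14Aux

open Finset Equiv Equiv.Perm

variable {n : ℕ} {R : Type*} [CommRing R] (A : Matrix (Fin n) (Fin n) R)

theorem keyLem (S : Finset (Fin n)) (π : Equiv.Perm (Fin n)) (hπ : ∀ x, x ∉ S → π x = x) :
    ∑ σ ∈ univ.filter (fun σ : Equiv.Perm (Fin n) => ∀ i ∈ S, σ i = π i),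
        ((Equiv.Perm.sign σ : ℤ) : R) * ∏ i, A i (σ i)
      = ((Equiv.Perm.sign π : ℤ) : R) * (∏ i ∈ S, A i (π i)) * pminor A S := by
  classical
  have hdet : pminor A S
      = ∑ τ : Equiv.Perm {a : Fin n // a ∉ S},
          ((Equiv.Perm.sign τ : ℤ) : R) * ∏ x : {a : Fin n // a ∉ S}, A (x : Fin n) ((τ x : Fin n)) := by
    rw [pminor, ← Matrix.det_transpose, Matrix.det_apply']
    simp [Matrix.transpose_apply]
  rw [hdet, Finset.mul_sum]
  have hfix : ∀ σ ∈ univ.filter (fun σ : Equiv.Perm (Fin n) => ∀ i ∈ S, σ i = π i),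
      ∀ x, (π⁻¹ * σ) x ∉ S ↔ x ∉ S := by
    intro σ hσ
    simp only [Finset.mem_filter, Finset.mem_univ, true_and] at hσ
    have hid : ∀ x ∈ S, (π⁻¹ * σ) x = x := by
      intro x hx
      simp [Equiv.Perm.mul_apply, hσ x hx]
    intro x
    refine Iff.symm ?_
    constructor
    · intro hx hcon
      have h1 : (π⁻¹ * σ) ((π⁻¹ * σ) x) = (π⁻¹ * σ) x := hid _ hcon
      have h2 : (π⁻¹ * σ) x = x := (π⁻¹ * σ).injective h1
      exact hx (h2 ▸ hcon)
    · intro hx hcon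
      exact hx (by rw [hid x hcon]; exact hcon)
  have hleft : ∀ σ (hσ : σ ∈ univ.filter (fun σ : Equiv.Perm (Fin n) => ∀ i ∈ S, σ i = π i)),
      π * Equiv.Perm.ofSubtype ((π⁻¹ * σ).subtypePerm (p := fun a => a ∉ S) (hfix σ hσ)) = σ := by
    intro σ hσ
    rw [Equiv.Perm.ofSubtype_subtypePerm]
    · group
    · intro x hx hxS'
      simp only [Finset.mem_filter, Finset.mem_univ, true_and] at hσ
      exact hx (by rw [Equiv.Perm.mul_apply, hσ x hxS']; exact π.symm_apply_apply x)
  have hprod : ∀ τ : Equiv.Perm {a : Fin n // a ∉ S},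
      ∏ i : Fin n, A i ((π * Equiv.Perm.ofSubtype τ) i)
        = (∏ i ∈ S, A i (π i)) * ∏ x : {a : Fin n // a ∉ S}, A (x : Fin n) ((τ x : Fin n)) := by
    intro τ
    rw [← Finset.prod_mul_prod_compl S]
    congr 1
    · refine Finset.prod_congr rfl fun i hi => ?_
      rw [Equiv.Perm.mul_apply, Equiv.Perm.ofSubtype_apply_of_not_mem τ (by simpa using hi)]
    · rw [Finset.prod_subtype (Sᶜ) (fun x => Finset.mem_compl) (fun i => A i ((π * Equiv.Perm.ofSubtype τ) i))]
      refine Finset.prod_congr rfl fun x _ => ?_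
      have h1 : (π * Equiv.Perm.ofSubtype τ) (x : Fin n) = ((τ x : Fin n)) := by
        rw [Equiv.Perm.mul_apply, Equiv.Perm.ofSubtype_apply_coe, hπ _ (τ x).2]
      rw [h1]
  refine Finset.sum_nbij'
    (i := fun σ => if h : σ ∈ univ.filter (fun σ : Equiv.Perm (Fin n) => ∀ i ∈ S, σ i = π i)
      then Equiv.Perm.subtypePerm (π⁻¹ * σ) (hfix σ h) else 1)
    (j := fun τ => π * Equiv.Perm.ofSubtype τ) ?_ ?_ ?_ ?_ ?_
  · intro σ hσ; exact Finset.mem_univ _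
  · intro τ _
    simp only [Finset.mem_filter, Finset.mem_univ, true_and]
    intro i hi
    have : Equiv.Perm.ofSubtype τ i = i :=
      Equiv.Perm.ofSubtype_apply_of_not_mem τ (by simpa using hi)
    simp [Equiv.Perm.mul_apply, this]
  · intro σ hσ
    simp only [dif_pos hσ]
    exact hleft σ hσ
  · intro τ hτ
    have hmem : π * Equiv.Perm.ofSubtype τ ∈
        univ.filter (fun σ : Equiv.Perm (Fin n) => ∀ i ∈ S, σ i = π i) := by
      simp only [Finset.mem_filter, Finset.mem_univ, true_and]
      intro i hi
      have : Equiv.Perm.ofSubtype τ i = i :=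
        Equiv.Perm.ofSubtype_apply_of_not_mem τ (by simpa using hi)
      simp [Equiv.Perm.mul_apply, this]
    simp only [dif_pos hmem]
    ext x
    have hg : π⁻¹ * (π * Equiv.Perm.ofSubtype τ) = Equiv.Perm.ofSubtype τ := by group
    simp only [Equiv.Perm.subtypePerm_apply, hg, Equiv.Perm.ofSubtype_apply_coe]
  · intro σ hσ
    simp only [dif_pos hσ]
    set τ := (π⁻¹ * σ).subtypePerm (p := fun a => a ∉ S) (hfix σ hσ) with hτdef
    have hστ : σ = π * Equiv.Perm.ofSubtype τ := (hleft σ hσ).symm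
    rw [hστ, hprod τ]
    have hsign : ((Equiv.Perm.sign (π * Equiv.Perm.ofSubtype τ) : ℤ) : R)
        = ((Equiv.Perm.sign π : ℤ) : R) * ((Equiv.Perm.sign τ : ℤ) : R) := by
      rw [map_mul, Equiv.Perm.sign_ofSubtype]
      push_cast
      ring
    rw [hsign]
    ring

theorem D1 (i : Fin n) :
    ∑ σ ∈ univ.filter (fun σ : Equiv.Perm (Fin n) => σ i = i),
        ((Equiv.Perm.sign σ : ℤ) : R) * ∏ k, A k (σ k)
      = A i i * pminor A {i} := by
  have h := keyLem A {i} 1 (fun x _ => rfl)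
  simp only [Equiv.Perm.sign_one, Units.val_one, Int.cast_one, one_mul,
    Finset.mem_singleton, Finset.prod_singleton, Equiv.Perm.one_apply] at h
  convert h using 2
  ext σ
  simp

theorem D2 (i j : Fin n) (hij : i ≠ j) :
    ∑ σ ∈ univ.filter (fun σ : Equiv.Perm (Fin n) => σ i = j ∧ σ j = i),
        ((Equiv.Perm.sign σ : ℤ) : R) * ∏ k, A k (σ k)
      = -(A i j * A j i * pminor A {i, j}) := by
  have h := keyLem A {i, j} (Equiv.swap i j)
    (fun x hx => by
      simp only [Finset.mem_insert, Finset.mem_singleton, not_or] at hx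
      exact Equiv.swap_apply_of_ne_of_ne hx.1 hx.2)
  rw [Equiv.Perm.sign_swap hij] at h
  rw [Finset.prod_pair hij, Equiv.swap_apply_left, Equiv.swap_apply_right] at h
  have hfilter : (univ.filter (fun σ : Equiv.Perm (Fin n) => ∀ k ∈ ({i, j} : Finset (Fin n)), σ k = Equiv.swap i j k))
      = univ.filter (fun σ : Equiv.Perm (Fin n) => σ i = j ∧ σ j = i) := by
    ext σ
    simp [Finset.forall_mem_insert, Equiv.swap_apply_left, Equiv.swap_apply_right]
  rw [hfilter] at h
  rw [h]
  push_cast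
  ring

theorem D3 (i j k : Fin n) (hij : i ≠ j) (hik : i ≠ k) (hjk : j ≠ k) :
    ∑ σ ∈ univ.filter (fun σ : Equiv.Perm (Fin n) => σ i = i ∧ σ j = k ∧ σ k = j),
        ((Equiv.Perm.sign σ : ℤ) : R) * ∏ m, A m (σ m)
      = -(A i i * A j k * A k j * pminor A {i, j, k}) := by
  have h := keyLem A {i, j, k} (Equiv.swap j k)
    (fun x hx => by
      simp only [Finset.mem_insert, Finset.mem_singleton, not_or] at hx
      exact Equiv.swap_apply_of_ne_of_ne hx.2.1 hx.2.2)
  rw [Equiv.Perm.sign_swap hjk] at h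
  have hswapi : Equiv.swap j k i = i := Equiv.swap_apply_of_ne_of_ne hij hik
  have hprod : (∏ m ∈ ({i, j, k} : Finset (Fin n)), A m (Equiv.swap j k m))
      = A i i * A j k * A k j := by
    rw [Finset.prod_insert (by simp [hij, hik]), Finset.prod_pair hjk,
      hswapi, Equiv.swap_apply_left, Equiv.swap_apply_right]
    ring
  rw [hprod] at h
  have hfilter : (univ.filter (fun σ : Equiv.Perm (Fin n) =>
        ∀ m ∈ ({i, j, k} : Finset (Fin n)), σ m = Equiv.swap j k m))
      = univ.filter (fun σ : Equiv.Perm (Fin n) => σ i = i ∧ σ j = k ∧ σ k = j) := by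
    ext σ
    simp [Finset.forall_mem_insert, hswapi, Equiv.swap_apply_left, Equiv.swap_apply_right]
  rw [hfilter] at h
  rw [h]
  push_cast
  ring

theorem count2 (σ : Equiv.Perm (Fin n)) :
    σ.cycleType.count 2 =
      (univ.filter fun p : Fin n × Fin n => p.1 < p.2 ∧ σ p.1 = p.2 ∧ σ p.2 = p.1).card := by
  classical
  rw [Equiv.Perm.cycleType_def, Multiset.count_map]
  rw [← Finset.filter_val, Finset.card_def]
  symm
  apply Finset.card_bij (fun (p : Fin n × Fin n) _ => Equiv.swap p.1 p.2)
  · rintro p hp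
    simp only [Finset.mem_filter, Finset.mem_univ, true_and] at hp
    obtain ⟨hlt, h1, h2⟩ := hp
    have hne : p.1 ≠ p.2 := ne_of_lt hlt
    simp only [Finset.mem_filter]
    constructor
    · rw [Equiv.Perm.mem_cycleFactorsFinset_iff]
      refine ⟨Equiv.Perm.isCycle_swap hne, ?_⟩
      intro a ha
      rw [Equiv.Perm.support_swap hne] at ha
      simp only [Finset.mem_insert, Finset.mem_singleton] at ha
      rcases ha with rfl | rfl
      · rw [Equiv.swap_apply_left, h1]
      · rw [Equiv.swap_apply_right, h2]
    · simp only [Function.comp_apply]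
      rw [Equiv.Perm.card_support_eq_two.mpr ⟨p.1, p.2, hne, rfl⟩]
  · rintro p hp q hq h
    simp only [Finset.mem_filter, Finset.mem_univ, true_and] at hp hq
    obtain ⟨hplt, hp1, hp2⟩ := hp
    obtain ⟨hqlt, hq1, hq2⟩ := hq
    have hpe : p.1 ≠ p.2 := ne_of_lt hplt
    have happ : Equiv.swap q.1 q.2 p.1 = p.2 := by rw [← h, Equiv.swap_apply_left]
    rw [Equiv.swap_apply_def] at happ
    split_ifs at happ with e1 e2
    · exact Prod.ext e1 (by rw [← happ])
    · exfalso
      have : p.1 < p.2 := hplt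
      rw [e2, ← happ] at this
      exact absurd (this.trans hqlt) (lt_irrefl _)
    · exact absurd happ.symm (Ne.symm hpe)
  · rintro c hc
    simp only [Finset.mem_filter, Function.comp_apply] at hc
    obtain ⟨hc1, hc2⟩ := hc
    obtain ⟨x, y, hxy, rfl⟩ := Equiv.Perm.card_support_eq_two.mp hc2.symm
    have hσ := (Equiv.Perm.mem_cycleFactorsFinset_iff.mp hc1).2
    have hx : x ∈ (Equiv.swap x y).support := by
      rw [Equiv.Perm.support_swap hxy]; simp
    have hy : y ∈ (Equiv.swap x y).support := by
      rw [Equiv.Perm.support_swap hxy]; simp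
    have hσx : σ x = y := by rw [← hσ x hx, Equiv.swap_apply_left]
    have hσy : σ y = x := by rw [← hσ y hy, Equiv.swap_apply_right]
    rcases lt_trichotomy x y with hlt | heq | hgt
    · exact ⟨(x, y), by simp [hlt, hσx, hσy], rfl⟩
    · exact absurd heq hxy
    · exact ⟨(y, x), by simp [hgt, hσx, hσy], (Equiv.swap_comm x y) ▸ rfl⟩

theorem c1R (σ : Equiv.Perm (Fin n)) :
    ((permC1 σ : ℤ) : R) = ∑ i : Fin n, if σ i = i then (1 : R) else 0 := by
  rw [permC1, Finset.sum_boole]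
  push_cast
  rfl

theorem c2R (σ : Equiv.Perm (Fin n)) :
    ((permC2 σ : ℤ) : R) = ∑ p : Fin n × Fin n,
      if p.1 < p.2 ∧ σ p.1 = p.2 ∧ σ p.2 = p.1 then (1 : R) else 0 := by
  rw [permC2, count2, Finset.sum_boole]
  push_cast
  rfl

theorem E0 : (∑ σ : Equiv.Perm (Fin n), ((Equiv.Perm.sign σ : ℤ) : R) * ∏ i, A i (σ i))
    = Matrix.det A := by
  rw [← Matrix.det_transpose, Matrix.det_apply']
  simp [Matrix.transpose_apply]

theorem E1 : (∑ σ : Equiv.Perm (Fin n),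
      ((permC1 σ : ℤ) : R) * (((Equiv.Perm.sign σ : ℤ) : R) * ∏ i, A i (σ i)))
    = F1 A := by
  have step : ∀ σ : Equiv.Perm (Fin n),
      ((permC1 σ : ℤ) : R) * (((Equiv.Perm.sign σ : ℤ) : R) * ∏ i, A i (σ i))
        = ∑ i : Fin n, if σ i = i then ((Equiv.Perm.sign σ : ℤ) : R) * ∏ k, A k (σ k) else 0 := by
    intro σ
    rw [c1R, Finset.sum_mul]
    refine Finset.sum_congr rfl fun i _ => ?_
    by_cases h : σ i = i <;> simp [h]
  rw [Finset.sum_congr rfl fun σ _ => step σ, Finset.sum_comm]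
  rw [F1]
  refine Finset.sum_congr rfl fun i _ => ?_
  rw [← D1 A i, Finset.sum_filter]

theorem E2 : (∑ σ : Equiv.Perm (Fin n),
      ((permC2 σ : ℤ) : R) * (((Equiv.Perm.sign σ : ℤ) : R) * ∏ i, A i (σ i)))
    = -(T2 A) := by
  have step : ∀ σ : Equiv.Perm (Fin n),
      ((permC2 σ : ℤ) : R) * (((Equiv.Perm.sign σ : ℤ) : R) * ∏ i, A i (σ i))
        = ∑ p : Fin n × Fin n, if p.1 < p.2 ∧ σ p.1 = p.2 ∧ σ p.2 = p.1
            then ((Equiv.Perm.sign σ : ℤ) : R) * ∏ k, A k (σ k) else 0 := by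
    intro σ
    rw [c2R, Finset.sum_mul]
    refine Finset.sum_congr rfl fun p _ => ?_
    by_cases h : p.1 < p.2 ∧ σ p.1 = p.2 ∧ σ p.2 = p.1 <;> simp [h]
  rw [Finset.sum_congr rfl fun σ _ => step σ, Finset.sum_comm]
  have inner : ∀ p : Fin n × Fin n,
      (∑ σ : Equiv.Perm (Fin n), if p.1 < p.2 ∧ σ p.1 = p.2 ∧ σ p.2 = p.1
          then ((Equiv.Perm.sign σ : ℤ) : R) * ∏ k, A k (σ k) else 0)
        = if p.1 < p.2 then -(A p.1 p.2 * A p.2 p.1 * pminor A {p.1, p.2}) else 0 := by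
    intro p
    by_cases hp : p.1 < p.2
    · rw [if_pos hp, ← D2 A p.1 p.2 (ne_of_lt hp), Finset.sum_filter]
      exact Finset.sum_congr rfl fun σ _ => by simp [hp]
    · rw [if_neg hp]
      exact Finset.sum_eq_zero fun σ _ => by simp [hp]
  rw [Finset.sum_congr rfl fun p _ => inner p, T2, ← Finset.sum_neg_distrib, Finset.sum_filter]

theorem E3 : (∑ σ : Equiv.Perm (Fin n),
      ((permC1 σ : ℤ) : R) * ((permC2 σ : ℤ) : R) * (((Equiv.Perm.sign σ : ℤ) : R) * ∏ i, A i (σ i)))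
    = -(T12 A) := by
  have step : ∀ σ : Equiv.Perm (Fin n),
      ((permC1 σ : ℤ) : R) * ((permC2 σ : ℤ) : R) * (((Equiv.Perm.sign σ : ℤ) : R) * ∏ i, A i (σ i))
        = ∑ t : Fin n × Fin n × Fin n,
            if σ t.1 = t.1 ∧ t.2.1 < t.2.2 ∧ σ t.2.1 = t.2.2 ∧ σ t.2.2 = t.2.1
            then ((Equiv.Perm.sign σ : ℤ) : R) * ∏ k, A k (σ k) else 0 := by
    intro σ
    have h3 : (∑ t : Fin n × Fin n × Fin n,
          if σ t.1 = t.1 ∧ t.2.1 < t.2.2 ∧ σ t.2.1 = t.2.2 ∧ σ t.2.2 = t.2.1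
          then ((Equiv.Perm.sign σ : ℤ) : R) * ∏ k, A k (σ k) else 0)
        = ∑ i : Fin n, ∑ p : Fin n × Fin n,
          if σ i = i ∧ p.1 < p.2 ∧ σ p.1 = p.2 ∧ σ p.2 = p.1
          then ((Equiv.Perm.sign σ : ℤ) : R) * ∏ k, A k (σ k) else 0 :=
      Fintype.sum_prod_type _
    rw [h3, c1R, c2R, Finset.sum_mul_sum, Finset.sum_mul]
    refine Finset.sum_congr rfl fun i _ => ?_
    rw [Finset.sum_mul]
    refine Finset.sum_congr rfl fun p _ => ?_
    by_cases h1 : σ i = i <;> by_cases h2 : p.1 < p.2 ∧ σ p.1 = p.2 ∧ σ p.2 = p.1 <;>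
      simp [h1, h2]
  rw [Finset.sum_congr rfl fun σ _ => step σ, Finset.sum_comm]
  have inner : ∀ t : Fin n × Fin n × Fin n,
      (∑ σ : Equiv.Perm (Fin n), if σ t.1 = t.1 ∧ t.2.1 < t.2.2 ∧ σ t.2.1 = t.2.2 ∧ σ t.2.2 = t.2.1
          then ((Equiv.Perm.sign σ : ℤ) : R) * ∏ k, A k (σ k) else 0)
        = if t.1 ≠ t.2.1 ∧ t.1 ≠ t.2.2 ∧ t.2.1 < t.2.2
            then -(A t.1 t.1 * A t.2.1 t.2.2 * A t.2.2 t.2.1 * pminor A {t.1, t.2.1, t.2.2}) else 0 := by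
    intro t
    by_cases hT : t.1 ≠ t.2.1 ∧ t.1 ≠ t.2.2 ∧ t.2.1 < t.2.2
    · obtain ⟨h1, h2, h3⟩ := hT
      rw [if_pos ⟨h1, h2, h3⟩, ← D3 A t.1 t.2.1 t.2.2 h1 h2 (ne_of_lt h3), Finset.sum_filter]
      exact Finset.sum_congr rfl fun σ _ => by simp [h3]
    · rw [if_neg hT]
      refine Finset.sum_eq_zero fun σ _ => ?_
      rw [if_neg]
      rintro ⟨hf, hlt, ha, hb⟩
      apply hT
      refine ⟨?_, ?_, hlt⟩
      · intro he
        rw [he] at hf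
        exact ne_of_lt hlt (hf.symm.trans ha)
      · intro he
        rw [he] at hf
        exact ne_of_lt hlt ((hf.symm.trans hb).symm)
  rw [Finset.sum_congr rfl fun t _ => inner t, T12, ← Finset.sum_neg_distrib, Finset.sum_filter]

end Stmt14Aux

/-- **Principal-minor reduction.** For every `n × n` matrix `A` over a commutative ring,
`∑_σ sgn(σ)(c₁(σ)−1)(1−2c₂(σ)) ∏ᵢ a_{i,σ(i)} = F₁(A) − det A + 2(T₁₂(A) − T₂(A))`. -/
theorem stmt_14 {n : ℕ} {R : Type*} [CommRing R] (A : Matrix (Fin n) (Fin n) R) :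
    (∑ σ : Equiv.Perm (Fin n),
        (((Equiv.Perm.sign σ : ℤ) * (permC1 σ - 1) * (1 - 2 * permC2 σ) : ℤ) : R) *
          ∏ i : Fin n, A i (σ i)) =
      F1 A - Matrix.det A + 2 * (T12 A - T2 A) := by
  classical
  have expand : ∀ σ : Equiv.Perm (Fin n),
      (((Equiv.Perm.sign σ : ℤ) * (permC1 σ - 1) * (1 - 2 * permC2 σ) : ℤ) : R) *
          ∏ i : Fin n, A i (σ i)
        = ((permC1 σ : ℤ) : R) * (((Equiv.Perm.sign σ : ℤ) : R) * ∏ i, A i (σ i))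
          - ((Equiv.Perm.sign σ : ℤ) : R) * ∏ i, A i (σ i)
          - 2 * (((permC1 σ : ℤ) : R) * ((permC2 σ : ℤ) : R) *
              (((Equiv.Perm.sign σ : ℤ) : R) * ∏ i, A i (σ i)))
          + 2 * (((permC2 σ : ℤ) : R) * (((Equiv.Perm.sign σ : ℤ) : R) * ∏ i, A i (σ i))) := by
    intro σ
    push_cast
    ring
  rw [Finset.sum_congr rfl fun σ _ => expand σ]
  rw [Finset.sum_add_distrib, Finset.sum_sub_distrib, Finset.sum_sub_distrib,
    ← Finset.mul_sum, ← Finset.mul_sum]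
  rw [Stmt14Aux.E0, Stmt14Aux.E1, Stmt14Aux.E2, Stmt14Aux.E3]
  ring
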